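/- Let A and B be n×n generalized tournament matrices with the same principal minors of orders 2 and 3. Then every connected component of the equality graph E(A,B) is a clan of both A and B, and every connected component of the difference graph D(A,B) is a clan of both A and B. -/
import Mathlib


def IsGTM {n : ℕ} (M : Matrix (Fin n) (Fin n) ℝ) : Prop :=
  (∀ i j, 0 ≤ M i j) ∧ M + M.transpose = (Matrix.of fun _ _ => (1 : ℝ)) - 1

def IsClan {m : Type*} (M : Matrix m m ℝ) (X : Set m) : Prop :=
  ∀ i ∈ X, ∀ j ∈ X, ∀ k ∉ X, M i k = M j k ∧ M k i = M k j

def SameMinors {n : ℕ} (A B : Matrix (Fin n) (Fin n) ℝ) (P : ℕ → Prop) : Prop :=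
  ∀ S : Finset (Fin n), P S.card →
    (A.submatrix (fun i : ↥S => (i : Fin n)) (fun i : ↥S => (i : Fin n))).det =
      (B.submatrix (fun i : ↥S => (i : Fin n)) (fun i : ↥S => (i : Fin n))).det

/-- Adjacency relation of the equality graph `E(A,B)`. -/
def EAdj {n : ℕ} (A B : Matrix (Fin n) (Fin n) ℝ) (i j : Fin n) : Prop :=
  i ≠ j ∧ A i j = B i j ∧ A i j ≠ 1 / 2

/-- Adjacency relation of the difference graph `D(A,B)`. -/
def DAdj {n : ℕ} (A B : Matrix (Fin n) (Fin n) ℝ) (i j : Fin n) : Prop :=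
  i ≠ j ∧ A i j = 1 - B i j ∧ A i j ≠ 1 / 2

namespace Stmt10Aux

lemma gtm_diag {n : ℕ} {M : Matrix (Fin n) (Fin n) ℝ} (h : IsGTM M) (i : Fin n) : M i i = 0 := by
  have := congrFun (congrFun h.2 i) i
  simp [Matrix.add_apply, Matrix.transpose_apply, Matrix.sub_apply, Matrix.one_apply] at this
  linarith

lemma gtm_compl {n : ℕ} {M : Matrix (Fin n) (Fin n) ℝ} (h : IsGTM M) {i j : Fin n} (hij : i ≠ j) :
    M i j + M j i = 1 := by
  have := congrFun (congrFun h.2 i) j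
  simp [Matrix.add_apply, Matrix.transpose_apply, Matrix.sub_apply, Matrix.one_apply, hij] at this
  linarith

lemma det2 {n : ℕ} {M : Matrix (Fin n) (Fin n) ℝ} (hM : IsGTM M) {i j : Fin n} (hij : i ≠ j) :
    (M.submatrix (fun p : ↥({i,j} : Finset (Fin n)) => (p : Fin n))
      (fun p : ↥({i,j} : Finset (Fin n)) => (p : Fin n))).det = -(M i j * M j i) := by
  set S : Finset (Fin n) := {i, j} with hS
  have hcard : S.card = 2 := Finset.card_pair hij
  have hi : i ∈ S := by simp [hS]
  have hj : j ∈ S := by simp [hS]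
  set f : Fin 2 → ↥S := ![⟨i, hi⟩, ⟨j, hj⟩] with hf
  have hinj : Function.Injective f := by
    intro a b hab
    fin_cases a <;> fin_cases b <;>
      first
      | rfl
      | (exfalso; apply hij; simpa [hf, Subtype.ext_iff] using hab)
      | (exfalso; apply hij; simpa [hf, Subtype.ext_iff, eq_comm] using hab)
  have hb : Function.Bijective f :=
    (Fintype.bijective_iff_injective_and_card f).2 ⟨hinj, by simp [Fintype.card_coe, hcard]⟩
  rw [← Matrix.det_submatrix_equiv_self (Equiv.ofBijective f hb), Matrix.det_fin_two]
  simp [Matrix.submatrix_apply, hf, gtm_diag hM]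

lemma det3 {n : ℕ} {M : Matrix (Fin n) (Fin n) ℝ} (hM : IsGTM M) {i j k : Fin n}
    (hij : i ≠ j) (hik : i ≠ k) (hjk : j ≠ k) :
    (M.submatrix (fun p : ↥({i,j,k} : Finset (Fin n)) => (p : Fin n))
      (fun p : ↥({i,j,k} : Finset (Fin n)) => (p : Fin n))).det =
    M i j * M j k * M k i + M i k * M k j * M j i := by
  set S : Finset (Fin n) := {i, j, k} with hS
  have hcard : S.card = 3 := by
    rw [hS, Finset.card_insert_of_notMem (by simp [hij, hik]), Finset.card_pair hjk]
  have hi : i ∈ S := by simp [hS]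
  have hj : j ∈ S := by simp [hS]
  have hk : k ∈ S := by simp [hS]
  set f : Fin 3 → ↥S := ![⟨i, hi⟩, ⟨j, hj⟩, ⟨k, hk⟩] with hf
  have hinj : Function.Injective f := by
    intro a b hab
    fin_cases a <;> fin_cases b <;>
      first
      | rfl
      | (exfalso; apply hij; simpa [hf, Subtype.ext_iff] using hab)
      | (exfalso; apply hij; simpa [hf, Subtype.ext_iff, eq_comm] using hab)
      | (exfalso; apply hik; simpa [hf, Subtype.ext_iff] using hab)
      | (exfalso; apply hik; simpa [hf, Subtype.ext_iff, eq_comm] using hab)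
      | (exfalso; apply hjk; simpa [hf, Subtype.ext_iff] using hab)
      | (exfalso; apply hjk; simpa [hf, Subtype.ext_iff, eq_comm] using hab)
  have hb : Function.Bijective f :=
    (Fintype.bijective_iff_injective_and_card f).2 ⟨hinj, by simp [Fintype.card_coe, hcard]⟩
  rw [← Matrix.det_submatrix_equiv_self (Equiv.ofBijective f hb), Matrix.det_fin_three]
  simp [Matrix.submatrix_apply, hf, gtm_diag hM]
  ring

section Main

variable {n : ℕ} {A B : Matrix (Fin n) (Fin n) ℝ}
  (hA : IsGTM A) (hB : IsGTM B)
  (hmin : SameMinors A B (fun k => k = 2 ∨ k = 3))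

include hA hB hmin

lemma minor2 {i j : Fin n} (hij : i ≠ j) : A i j * A j i = B i j * B j i := by
  have h := hmin {i, j} (Or.inl (Finset.card_pair hij))
  rw [det2 hA hij, det2 hB hij] at h
  linarith

lemma minor3 {i j k : Fin n} (hij : i ≠ j) (hik : i ≠ k) (hjk : j ≠ k) :
    A i j * A j k * A k i + A i k * A k j * A j i =
      B i j * B j k * B k i + B i k * B k j * B j i := by
  have hcard : ({i, j, k} : Finset (Fin n)).card = 3 := by
    rw [Finset.card_insert_of_notMem (by simp [hij, hik]), Finset.card_pair hjk]
  have h := hmin {i, j, k} (Or.inr hcard)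
  rw [det3 hA hij hik hjk, det3 hB hij hik hjk] at h
  exact h

/-- Off-diagonal entries agree or are complementary. -/
lemma dichotomy {i j : Fin n} (hij : i ≠ j) : A i j = B i j ∨ A i j = 1 - B i j := by
  have h2 := minor2 hA hB hmin hij
  have hA' := gtm_compl hA hij
  have hB' := gtm_compl hB hij
  have : (A i j - B i j) * (A i j + B i j - 1) = 0 := by
    linear_combination -h2 + A i j * hA' - B i j * hB'
  rcases mul_eq_zero.1 this with h | h
  · left; linarith
  · right; linarith

/-- If `k` is not E-adjacent to `i`, then entries are complementary. -/
lemma eOut {i k : Fin n} (hik : i ≠ k) (hne : ¬ EAdj A B i k) : B i k = 1 - A i k := by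
  rcases dichotomy hA hB hmin hik with h | h
  · have h12 : A i k = 1 / 2 := by
      by_contra hc
      exact hne ⟨hik, h, hc⟩
    rw [h12] at h ⊢
    linarith
  · linarith

/-- If `k` is not D-adjacent to `i`, then entries agree. -/
lemma dOut {i k : Fin n} (hik : i ≠ k) (hne : ¬ DAdj A B i k) : B i k = A i k := by
  rcases dichotomy hA hB hmin hik with h | h
  · linarith
  · have h12 : A i k = 1 / 2 := by
      by_contra hc
      exact hne ⟨hik, h, hc⟩
    rw [h12] at h ⊢
    linarith

omit hA hB hmin in
lemma alg (a b c : ℝ) (ha : a ≠ 1 / 2)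
    (h : a * b * c + (1 - a) * (1 - b) * (1 - c) = a * (1 - b) * (1 - c) + (1 - a) * b * c) :
    b + c = 1 := by
  have h2 : (2 * a - 1) * (b + c - 1) = 0 := by linear_combination h
  rcases mul_eq_zero.1 h2 with h' | h'
  · exact absurd (by linarith) ha
  · linarith

/-- Key step: for an edge `{i,j}` (in either graph) and `k` outside both relations. -/
lemma step {i j k : Fin n} (hij : i ≠ j) (hik : i ≠ k) (hjk : j ≠ k)
    (ha : A i j ≠ 1 / 2)
    (hcase : (B i j = A i j ∧ B i k = 1 - A i k ∧ B j k = 1 - A j k) ∨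
      (B i j = 1 - A i j ∧ B i k = A i k ∧ B j k = A j k)) :
    A i k = A j k := by
  have hm := minor3 hA hB hmin hij hik hjk
  set a := A i j with haa
  set b := A j k with hbb
  set c := A k i with hcc
  have eAik : A i k = 1 - c := by have := gtm_compl hA hik; linarith
  have eAkj : A k j = 1 - b := by have := gtm_compl hA hjk.symm; linarith
  have eAji : A j i = 1 - a := by have := gtm_compl hA hij; linarith
  have hBc := gtm_compl hB hij
  have hBik := gtm_compl hB hik
  have hBjk := gtm_compl hB hjk
  rcases hcase with ⟨h1, h2, h3⟩ | ⟨h1, h2, h3⟩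
  · have eBij : B i j = a := h1
    have eBjk : B j k = 1 - b := by rw [h3]
    have eBkj : B k j = b := by linarith
    have eBik : B i k = c := by rw [h2, eAik]; ring
    have eBki : B k i = 1 - c := by linarith
    have eBji : B j i = 1 - a := by linarith
    rw [eAik, eAkj, eAji, eBij, eBjk, eBki, eBik, eBkj, eBji] at hm
    have := alg a b c ha (by linear_combination hm)
    rw [eAik]; linarith
  · have eBij : B i j = 1 - a := h1
    have eBji : B j i = a := by linarith
    have eBjk : B j k = b := by rw [h3]
    have eBkj : B k j = 1 - b := by linarith
    have eBik : B i k = 1 - c := by rw [h2, eAik]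
    have eBki : B k i = c := by linarith
    rw [eAik, eAkj, eAji, eBij, eBjk, eBki, eBik, eBkj, eBji] at hm
    have := alg a b c ha (by linear_combination hm)
    rw [eAik]; linarith

lemma eConst {v k : Fin n} (hk : ¬ Relation.ReflTransGen (EAdj A B) v k) :
    ∀ w, Relation.ReflTransGen (EAdj A B) v w → A w k = A v k := by
  intro w hw
  induction hw with
  | refl => rfl
  | @tail b c hab hbc ih =>
    have hbk : b ≠ k := fun h => hk (h ▸ hab)
    have hck : c ≠ k := fun h => hk (h ▸ hab.tail hbc)
    have hBbk : B b k = 1 - A b k :=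
      eOut hA hB hmin hbk fun h => hk (hab.tail h)
    have hBck : B c k = 1 - A c k :=
      eOut hA hB hmin hck fun h => hk ((hab.tail hbc).tail h)
    have := step hA hB hmin hbc.1 hbk hck hbc.2.2
      (Or.inl ⟨hbc.2.1.symm, hBbk, hBck⟩)
    rw [← ih, ← this]

lemma dConst {v k : Fin n} (hk : ¬ Relation.ReflTransGen (DAdj A B) v k) :
    ∀ w, Relation.ReflTransGen (DAdj A B) v w → A w k = A v k := by
  intro w hw
  induction hw with
  | refl => rfl
  | @tail b c hab hbc ih =>
    have hbk : b ≠ k := fun h => hk (h ▸ hab)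
    have hck : c ≠ k := fun h => hk (h ▸ hab.tail hbc)
    have hBbk : B b k = A b k :=
      dOut hA hB hmin hbk fun h => hk (hab.tail h)
    have hBck : B c k = A c k :=
      dOut hA hB hmin hck fun h => hk ((hab.tail hbc).tail h)
    have := step hA hB hmin hbc.1 hbk hck hbc.2.2
      (Or.inr ⟨by linarith [hbc.2.1], hBbk, hBck⟩)
    rw [← ih, ← this]

end Main

end Stmt10Aux

theorem stmt10 {n : ℕ} (A B : Matrix (Fin n) (Fin n) ℝ)
    (hA : IsGTM A) (hB : IsGTM B)
    (hmin : SameMinors A B (fun k => k = 2 ∨ k = 3)) (v : Fin n) :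
    (IsClan A {w | Relation.ReflTransGen (EAdj A B) v w} ∧
      IsClan B {w | Relation.ReflTransGen (EAdj A B) v w}) ∧
    (IsClan A {w | Relation.ReflTransGen (DAdj A B) v w} ∧
      IsClan B {w | Relation.ReflTransGen (DAdj A B) v w}) := by
  constructor
  · have key : ∀ i ∈ {w | Relation.ReflTransGen (EAdj A B) v w},
        ∀ k ∉ {w | Relation.ReflTransGen (EAdj A B) v w},
        A i k = A v k ∧ B i k = 1 - A i k ∧ i ≠ k := by
      intro i hi k hk
      have hik : i ≠ k := fun h => hk (h ▸ hi)
      exact ⟨Stmt10Aux.eConst hA hB hmin hk i hi, Stmt10Aux.eOut hA hB hmin hik fun h => hk (hi.tail h), hik⟩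
    constructor
    · intro i hi j hj k hk
      obtain ⟨hi1, _, hik⟩ := key i hi k hk
      obtain ⟨hj1, _, hjk⟩ := key j hj k hk
      have h1 : A i k = A j k := hi1.trans hj1.symm
      refine ⟨h1, ?_⟩
      have := Stmt10Aux.gtm_compl hA hik
      have := Stmt10Aux.gtm_compl hA hjk
      linarith
    · intro i hi j hj k hk
      obtain ⟨hi1, hi2, hik⟩ := key i hi k hk
      obtain ⟨hj1, hj2, hjk⟩ := key j hj k hk
      have h1 : B i k = B j k := by rw [hi2, hj2, hi1, hj1]
      refine ⟨h1, ?_⟩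
      have := Stmt10Aux.gtm_compl hB hik
      have := Stmt10Aux.gtm_compl hB hjk
      linarith
  · have key : ∀ i ∈ {w | Relation.ReflTransGen (DAdj A B) v w},
        ∀ k ∉ {w | Relation.ReflTransGen (DAdj A B) v w},
        A i k = A v k ∧ B i k = A i k ∧ i ≠ k := by
      intro i hi k hk
      have hik : i ≠ k := fun h => hk (h ▸ hi)
      exact ⟨Stmt10Aux.dConst hA hB hmin hk i hi, Stmt10Aux.dOut hA hB hmin hik fun h => hk (hi.tail h), hik⟩
    constructor
    · intro i hi j hj k hk
      obtain ⟨hi1, _, hik⟩ := key i hi k hk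
      obtain ⟨hj1, _, hjk⟩ := key j hj k hk
      have h1 : A i k = A j k := hi1.trans hj1.symm
      refine ⟨h1, ?_⟩
      have := Stmt10Aux.gtm_compl hA hik
      have := Stmt10Aux.gtm_compl hA hjk
      linarith
    · intro i hi j hj k hk
      obtain ⟨hi1, hi2, hik⟩ := key i hi k hk
      obtain ⟨hj1, hj2, hjk⟩ := key j hj k hk
      have h1 : B i k = B j k := by rw [hi2, hj2, hi1, hj1]
      refine ⟨h1, ?_⟩
      have := Stmt10Aux.gtm_compl hB hik
      have := Stmt10Aux.gtm_compl hB hjk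
      linarith
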